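/- Let B, R be bounded positive operators on a complex Hilbert space with R ≥ 1 and BRB = R. Then B is invertible and R⁻¹BR = RBR⁻¹ = B⁻¹, and consequently the spectrum of B satisfies σ(B) = σ(B)⁻¹ = σ(B⁻¹). -/

import Mathlib

/-- If `B, R` are bounded positive operators on a complex Hilbert space with `R ≥ 1` and
`B R B = R`, then `B` is invertible, `R⁻¹ B R = R B R⁻¹ = B⁻¹`, and the spectrum of `B`
satisfies `σ(B) = σ(B)⁻¹ = σ(B⁻¹)`. -/
theorem stmt1 {H : Type*} [NormedAddCommGroup H] [InnerProductSpace ℂ H] [CompleteSpace H]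
    (B R : H →L[ℂ] H) (hB : B.IsPositive) (hR : R.IsPositive)
    (hR1 : (R - 1).IsPositive) (h : B * R * B = R) :
    IsUnit B ∧
    Ring.inverse R * B * R = Ring.inverse B ∧
    R * B * Ring.inverse R = Ring.inverse B ∧
    spectrum ℂ B = (spectrum ℂ B)⁻¹ ∧
    spectrum ℂ B = spectrum ℂ (Ring.inverse B) := by
  -- R is invertible since 1 ≤ R
  have hRle : (1 : H →L[ℂ] H) ≤ R := by
    rw [ContinuousLinearMap.le_def]; exact hR1
  have hRunit : IsUnit R := CStarAlgebra.isUnit_of_le 1 hRle isStrictlyPositive_one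
  obtain ⟨u, hu⟩ := hRunit
  -- left and right inverses of B
  have hL : (↑u⁻¹ * B * ↑u) * B = 1 := by
    have : (↑u⁻¹ : H →L[ℂ] H) * (B * R * B) = ↑u⁻¹ * R := by rw [h]
    calc (↑u⁻¹ * B * ↑u) * B = ↑u⁻¹ * (B * R * B) := by rw [hu]; simp only [mul_assoc]
    _ = ↑u⁻¹ * R := by rw [h]
    _ = 1 := by rw [← hu, u.inv_mul]
  have hS : B * (↑u * B * ↑u⁻¹) = 1 := by
    calc B * (↑u * B * ↑u⁻¹) = (B * R * B) * ↑u⁻¹ := by rw [hu]; simp only [mul_assoc]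
    _ = R * ↑u⁻¹ := by rw [h]
    _ = 1 := by rw [← hu, u.mul_inv]
  have hLS : (↑u⁻¹ * B * ↑u : H →L[ℂ] H) = ↑u * B * ↑u⁻¹ := by
    calc (↑u⁻¹ * B * ↑u : H →L[ℂ] H) = (↑u⁻¹ * B * ↑u) * (B * (↑u * B * ↑u⁻¹)) := by
          rw [hS, mul_one]
    _ = ((↑u⁻¹ * B * ↑u) * B) * (↑u * B * ↑u⁻¹) := by simp only [mul_assoc]
    _ = ↑u * B * ↑u⁻¹ := by rw [hL, one_mul]
  have hBunit : IsUnit B := by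
    refine isUnit_iff_exists.mpr ⟨↑u⁻¹ * B * ↑u, ?_, hL⟩
    rw [hLS]; exact hS
  obtain ⟨v, hv⟩ := hBunit
  have hvinv : (↑v⁻¹ : H →L[ℂ] H) = ↑u⁻¹ * B * ↑u :=
    Units.inv_eq_of_mul_eq_one_left (by rw [hv]; exact hL)
  have hinvB : Ring.inverse B = ↑u⁻¹ * B * ↑u := by
    have h' : Ring.inverse B = (↑v⁻¹ : H →L[ℂ] H) := by rw [← hv, Ring.inverse_unit]
    rw [h', hvinv]
  refine ⟨⟨v, hv⟩, ?_, ?_, ?_, ?_⟩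
  · rw [hinvB, ← hu, Ring.inverse_unit]
  · rw [hinvB, hLS, ← hu, Ring.inverse_unit]
  · -- σ(B) = σ(B)⁻¹
    have h1 : spectrum ℂ (Ring.inverse B) = spectrum ℂ B := by
      rw [hinvB, ← hv, spectrum.units_conjugate']
    have h2 : (spectrum ℂ B)⁻¹ = spectrum ℂ (Ring.inverse B) := by
      rw [← hv, Ring.inverse_unit, spectrum.map_inv]
    rw [h2, h1]
  · rw [hinvB, ← hv, spectrum.units_conjugate']
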